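/- arXiv:gr-qc/0407094 — 3 statements merged into one kernel-verified Lean document; each statement's English description precedes it below -/
import Mathlib

section
/- On a bicontinuous poset P, the sets (a,b) = {x : a ≪ x ≪ b}, for a,b ∈ P, form a basis for a topology (the interval topology). -/
open Set

/-- `a` is way below `x`. -/
def wayBelow {α : Type*} [Preorder α] (a x : α) : Prop :=
  ∀ S : Set α, S.Nonempty → DirectedOn (· ≤ ·) S → ∀ d, IsLUB S d → x ≤ d →
    ∃ s ∈ S, a ≤ s

/-- A poset is continuous if every element is the supremum of a directed set
of elements way below it. -/
def ContinuousPoset (α : Type*) [Preorder α] : Prop :=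
  ∀ x : α, ∃ S : Set α, S ⊆ {a | wayBelow a x} ∧ S.Nonempty ∧
    DirectedOn (· ≤ ·) S ∧ IsLUB S x

/-- A basis for a continuous poset. -/
def PosetBasis {α : Type*} [Preorder α] (B : Set α) : Prop :=
  ∀ x : α, ∃ S : Set α, S ⊆ B ∩ {a | wayBelow a x} ∧ S.Nonempty ∧
    DirectedOn (· ≤ ·) S ∧ IsLUB S x

/-- Scott open sets: upper sets inaccessible by directed suprema. -/
def ScottOpen {α : Type*} [Preorder α] (U : Set α) : Prop :=
  IsUpperSet U ∧ ∀ S : Set α, S.Nonempty → DirectedOn (· ≤ ·) S → ∀ d, IsLUB S d →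
    d ∈ U → (S ∩ U).Nonempty

/-- The Scott topology. -/
def scottTop (α : Type*) [Preorder α] : TopologicalSpace α :=
  TopologicalSpace.generateFrom {U | ScottOpen U}

/-- A bicontinuous poset. -/
def Bicontinuous (α : Type*) [Preorder α] : Prop :=
  ContinuousPoset α ∧
  (∀ x y : α, wayBelow x y ↔
    ∀ S : Set α, S.Nonempty → DirectedOn (· ≥ ·) S → ∀ i, IsGLB S i → i ≤ x →
      ∃ s ∈ S, s ≤ y) ∧
  (∀ x : α, DirectedOn (· ≥ ·) {y | wayBelow x y} ∧ IsGLB {y | wayBelow x y} x)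

/-- The basic open intervals `(a,b) = {x | a ≪ x ≪ b}`. -/
def intervalBasis (α : Type*) [Preorder α] : Set (Set α) :=
  {s | ∃ a b : α, s = {x | wayBelow a x ∧ wayBelow x b}}

/-- The interval topology, generated by the sets `(a,b)`. -/
def intervalTop (α : Type*) [Preorder α] : TopologicalSpace α :=
  TopologicalSpace.generateFrom (intervalBasis α)

/-- A globally hyperbolic poset: bicontinuous, with compact closed intervals. -/
def GloballyHyperbolic (α : Type*) [PartialOrder α] : Prop :=
  Bicontinuous α ∧ ∀ a b : α, @IsCompact α (intervalTop α) (Set.Icc a b)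

/-- The poset of closed intervals `[a,b]`, `a ≤ b`, under reverse inclusion. -/
def IX (α : Type*) [PartialOrder α] := {p : α × α // p.1 ≤ p.2}

instance IX.instPartialOrder {α : Type*} [PartialOrder α] : PartialOrder (IX α) where
  le x y := x.1.1 ≤ y.1.1 ∧ y.1.2 ≤ x.1.2
  le_refl x := ⟨le_refl _, le_refl _⟩
  le_trans x y z h1 h2 := ⟨h1.1.trans h2.1, h2.2.trans h1.2⟩
  le_antisymm x y h1 h2 :=
    Subtype.ext (Prod.ext_iff.mpr ⟨le_antisymm h1.1 h2.1, le_antisymm h2.2 h1.2⟩)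

section Rel

variable {β : Type*}

/-- Directedness with respect to an arbitrary relation. -/
def relDirectedOn (r : β → β → Prop) (S : Set β) : Prop :=
  ∀ x ∈ S, ∀ y ∈ S, ∃ z ∈ S, r x z ∧ r y z

/-- Least upper bound with respect to an arbitrary relation. -/
def relIsLUB (r : β → β → Prop) (S : Set β) (d : β) : Prop :=
  (∀ s ∈ S, r s d) ∧ ∀ u, (∀ s ∈ S, r s u) → r d u

/-- The way-below relation with respect to an arbitrary relation. -/
def relWayBelow (r : β → β → Prop) (a x : β) : Prop :=
  ∀ S : Set β, S.Nonempty → relDirectedOn r S → ∀ d, relIsLUB r S d → r x d →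
    ∃ s ∈ S, r a s

/-- An abstract basis: a transitive relation, interpolative from the `-` direction. -/
def AbstractBasis (r : β → β → Prop) : Prop :=
  Transitive r ∧ ∀ (F : Finset β) (x : β), (∀ y ∈ F, r y x) →
    ∃ z, (∀ y ∈ F, r y z) ∧ r z x

/-- Interpolation in the `+` direction. -/
def PlusInterpolative (r : β → β → Prop) : Prop :=
  ∀ (F : Finset β) (x : β), (∀ y ∈ F, r x y) → ∃ z, r x z ∧ (∀ y ∈ F, r z y)

/-- An ideal: a nonempty directed lower set. -/
def IsIdeal (r : β → β → Prop) (I : Set β) : Prop :=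
  I.Nonempty ∧ (∀ x y, r x y → y ∈ I → x ∈ I) ∧
    ∀ x ∈ I, ∀ y ∈ I, ∃ z ∈ I, r x z ∧ r y z

/-- The ideal completion: ideals ordered by inclusion. -/
def IdealCompletion (r : β → β → Prop) := {I : Set β // IsIdeal r I}

instance IdealCompletion.instPartialOrder {β : Type*} (r : β → β → Prop) :
    PartialOrder (IdealCompletion r) where
  le I J := I.1 ⊆ J.1
  le_refl I := subset_rfl
  le_trans I J K h1 h2 := Set.Subset.trans h1 h2
  le_antisymm I J h1 h2 := Subtype.ext (Set.Subset.antisymm h1 h2)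

end Rel

/-- The order on maximal elements induced by interval endpoints. -/
def maxLe {α : Type*} (left right : α → α) (a b : α) : Prop :=
  ∃ x, left x = a ∧ right x = b

/-- An interval poset. -/
structure IntervalPoset (α : Type*) [PartialOrder α] where
  left : α → α
  right : α → α
  left_max : ∀ x, IsMax (left x)
  right_max : ∀ x, IsMax (right x)
  glb : ∀ x, IsGLB {left x, right x} x
  glue : ∀ x y, right x = left y →
    ∃ z, IsGLB {x, y} z ∧ left z = left x ∧ right z = right y
  sub_left : ∀ x p, IsMax p → x ≤ p →
    ∃ z, IsGLB {left x, p} z ∧ left z = left x ∧ right z = p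
  sub_right : ∀ x p, IsMax p → x ≤ p →
    ∃ z, IsGLB {p, right x} z ∧ left z = p ∧ right z = right x

/-- An interval domain. -/
structure IntervalDomain (α : Type*) [PartialOrder α] extends IntervalPoset α where
  dcpo : ∀ S : Set α, S.Nonempty → DirectedOn (· ≤ ·) S → ∃ d, IsLUB S d
  cont : ContinuousPoset α
  ax1 : ∀ x p, IsMax p → wayBelow x p →
    (∀ z, IsGLB {left x, p} z → ∃ u, wayBelow z u) ∧
    (∀ z, IsGLB {p, right x} z → ∃ u, wayBelow z u)
  ax2b : ∀ x : α, (∃ u, wayBelow x u) ↔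
    (∀ y, left y = left x → y ≤ x →
      relWayBelow (fun u v => u ≤ v ∧ right u = right y ∧ right v = right y) y (right y))
  ax2c : ∀ x : α, (∃ u, wayBelow x u) ↔
    (∀ y, right y = right x → y ≤ x →
      relWayBelow (fun u v => u ≤ v ∧ left u = left y ∧ left v = left y) y (left y))
  ax3a : ∀ (p : α) (S : Set α), S.Nonempty → S ⊆ {z | left z = p} →
    DirectedOn (· ≤ ·) S → ∀ u, IsLUB S u →
      left u = p ∧ ∀ (q : α) (T : Set α), T.Nonempty → T ⊆ {z | left z = q} →
        DirectedOn (· ≤ ·) T → ∀ v, IsLUB T v → right '' T = right '' S →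
          right u = right v
  ax3b : ∀ (q : α) (S : Set α), S.Nonempty → S ⊆ {z | right z = q} →
    DirectedOn (· ≤ ·) S → ∀ u, IsLUB S u →
      right u = q ∧ ∀ (p : α) (T : Set α), T.Nonempty → T ⊆ {z | right z = p} →
        DirectedOn (· ≤ ·) T → ∀ v, IsLUB T v → left '' T = left '' S →
          left u = left v
  ax4 : ∀ x : α, @IsCompact α (scottTop α) ({y | x ≤ y} ∩ {y | IsMax y})

lemma wayBelow_mono_left {α : Type*} [Preorder α] {a' a x : α} (h : a' ≤ a)
    (hw : wayBelow a x) : wayBelow a' x := by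
  intro S hS hd d hlub hxd
  obtain ⟨s, hs, has⟩ := hw S hS hd d hlub hxd
  exact ⟨s, hs, h.trans has⟩

lemma wayBelow_mono_right {α : Type*} [Preorder α] {a x y : α} (hw : wayBelow a x)
    (h : x ≤ y) : wayBelow a y := fun S hS hd d hlub hyd => hw S hS hd d hlub (h.trans hyd)

lemma upSet_nonempty {α : Type*} [PartialOrder α] (h : Bicontinuous α) (x : α) :
    ∃ b, wayBelow x b := by
  by_contra hc
  push_neg at hc
  have hempty : {y | wayBelow x y} = (∅ : Set α) := by
    ext y; simp only [Set.mem_setOf_eq, Set.mem_empty_iff_false, iff_false]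
    exact hc y
  have hglb := (h.2.2 x).2
  rw [hempty] at hglb
  have htop : ∀ y : α, y ≤ x := fun y => hglb.2 (by simp [lowerBounds])
  have hwb : wayBelow x x := by
    rw [h.2.1 x x]
    intro S hS _ i _ _
    obtain ⟨s, hs⟩ := hS
    exact ⟨s, hs, htop s⟩
  exact hc x hwb

/-- on a bicontinuous poset, the sets `(a,b) = {x | a ≪ x ≪ b}` form a
basis for a topology, the interval topology. -/
theorem interval_basis_is_basis {α : Type*} [PartialOrder α] (h : Bicontinuous α) :
    @TopologicalSpace.IsTopologicalBasis α (intervalTop α) (intervalBasis α) := by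
  letI : TopologicalSpace α := intervalTop α
  refine ⟨?_, ?_, rfl⟩
  · rintro U1 ⟨a1, b1, rfl⟩ U2 ⟨a2, b2, rfl⟩ x ⟨hx1, hx2⟩
    obtain ⟨S, hSsub, hSne, hSdir, hSlub⟩ := h.1 x
    obtain ⟨s1, hs1, ha1s1⟩ := hx1.1 S hSne hSdir x hSlub le_rfl
    obtain ⟨s2, hs2, ha2s2⟩ := hx2.1 S hSne hSdir x hSlub le_rfl
    obtain ⟨s, hs, hs1s, hs2s⟩ := hSdir s1 hs1 s2 hs2
    have hsx : wayBelow s x := hSsub hs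
    obtain ⟨hTdir, hTglb⟩ := h.2.2 x
    have hTne : {y | wayBelow x y}.Nonempty := upSet_nonempty h x
    obtain ⟨t1, ht1, ht1b1⟩ := (h.2.1 x b1).1 hx1.2 _ hTne hTdir x hTglb le_rfl
    obtain ⟨t2, ht2, ht2b2⟩ := (h.2.1 x b2).1 hx2.2 _ hTne hTdir x hTglb le_rfl
    obtain ⟨t, ht, htt1, htt2⟩ := hTdir t1 ht1 t2 ht2
    refine ⟨{z | wayBelow s z ∧ wayBelow z t}, ⟨s, t, rfl⟩, ⟨hsx, ht⟩, ?_⟩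
    rintro z ⟨hsz, hzt⟩
    exact ⟨⟨wayBelow_mono_left (ha1s1.trans hs1s) hsz,
        wayBelow_mono_right hzt (htt1.trans ht1b1)⟩,
      ⟨wayBelow_mono_left (ha2s2.trans hs2s) hsz,
        wayBelow_mono_right hzt (htt2.trans ht2b2)⟩⟩
  · ext x
    simp only [Set.mem_sUnion, Set.mem_univ, iff_true]
    obtain ⟨S, hSsub, ⟨a, ha⟩, _, _⟩ := h.1 x
    obtain ⟨b, hb⟩ := upSet_nonempty h x
    exact ⟨{z | wayBelow a z ∧ wayBelow z b}, ⟨a, b, rfl⟩, hSsub ha, hb⟩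
end

section
/- In a bicontinuous poset X equipped with the interval topology, the order relation ≤ is a closed subset of X × X. -/
open Set

/-- wayBelow implies ≤. -/
lemma wayBelow_le {α : Type*} [Preorder α] {a x : α} (h : wayBelow a x) : a ≤ x := by
  obtain ⟨s, hs, hle⟩ := h {x} ⟨x, rfl⟩ (directedOn_singleton x) x isLUB_singleton le_rfl
  rw [Set.mem_singleton_iff] at hs
  exact hs ▸ hle

/-- In a bicontinuous poset, the set of elements way above `x` is nonempty. -/
lemma wayAbove_nonempty {α : Type*} [PartialOrder α] (h : Bicontinuous α) (x : α) :
    {z | wayBelow x z}.Nonempty := by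
  by_contra hne
  rw [Set.not_nonempty_iff_eq_empty] at hne
  have hglb := (h.2.2 x).2
  rw [hne] at hglb
  -- x is a top element
  have htop : ∀ y : α, y ≤ x := fun y =>
    hglb.2 (by simp [lowerBounds])
  have : wayBelow x x := (h.2.1 x x).mpr (fun S hS _ i _ _ => ⟨hS.choose, hS.choose_spec, htop _⟩)
  have : x ∈ {z | wayBelow x z} := this
  rw [hne] at this
  exact this

/-- Basic intervals are open. -/
lemma interval_isOpen {α : Type*} [PartialOrder α] (a b : α) :
    @IsOpen α (intervalTop α) {x | wayBelow a x ∧ wayBelow x b} :=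
  TopologicalSpace.isOpen_generateFrom_of_mem ⟨a, b, rfl⟩

/-- in a bicontinuous poset with the interval topology, `≤` is a closed
subset of `X × X`. -/
theorem le_closed {α : Type*} [PartialOrder α] (h : Bicontinuous α) :
    letI : TopologicalSpace α := intervalTop α
    IsClosed {p : α × α | p.1 ≤ p.2} := by
  letI : TopologicalSpace α := intervalTop α
  rw [← isOpen_compl_iff]
  rw [isOpen_prod_iff]
  intro x y hxy
  simp only [Set.mem_compl_iff, Set.mem_setOf_eq] at hxy
  -- get a ≪ x with ¬ a ≤ y
  obtain ⟨S, hSsub, hSne, hSdir, hSlub⟩ := h.1 x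
  have ha : ∃ a ∈ S, ¬ a ≤ y := by
    by_contra hc
    push_neg at hc
    exact hxy (hSlub.2 hc)
  obtain ⟨a, haS, hay⟩ := ha
  have hax : wayBelow a x := hSsub haS
  -- get b with y ≪ b and ¬ a ≤ b
  have hyglb := (h.2.2 y).2
  have hb : ∃ b, wayBelow y b ∧ ¬ a ≤ b := by
    by_contra hc
    push_neg at hc
    exact hay (hyglb.2 (fun z hz => hc z hz))
  obtain ⟨b, hyb, hab⟩ := hb
  -- get c with x ≪ c
  obtain ⟨c, hxc⟩ := wayAbove_nonempty h x
  -- get a' ≪ y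
  obtain ⟨T, hTsub, hTne, _, _⟩ := h.1 y
  obtain ⟨a', ha'T⟩ := hTne
  have ha'y : wayBelow a' y := hTsub ha'T
  refine ⟨{u | wayBelow a u ∧ wayBelow u c}, {v | wayBelow a' v ∧ wayBelow v b},
    interval_isOpen a c, interval_isOpen a' b, ⟨hax, hxc⟩, ⟨ha'y, hyb⟩, ?_⟩
  rintro ⟨u, v⟩ ⟨⟨hau, _⟩, ⟨_, hvb⟩⟩
  simp only [Set.mem_compl_iff, Set.mem_setOf_eq]
  intro huv
  exact hab ((wayBelow_le hau).trans (huv.trans (wayBelow_le hvb)))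
end

section
/- If C is a countable dense subset of a bicontinuous poset X in its interval topology, then the collection {(a,b) : a,b ∈ C, a ≪ b} is a countable basis for the interval topology; hence separability implies second countability. -/
open Set

section Aux
variable {α : Type*} [Preorder α] {α' : Type*} [PartialOrder α']

theorem wb_of_le_of_wb {a b x : α} (hab : a ≤ b) (h : wayBelow b x) : wayBelow a x :=
  fun S hne hdir d hlub hxd => by
    obtain ⟨s, hs, hbs⟩ := h S hne hdir d hlub hxd
    exact ⟨s, hs, hab.trans hbs⟩

theorem wb_of_wb_of_le {a x y : α} (h : wayBelow a x) (hxy : x ≤ y) : wayBelow a y :=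
  fun S hne hdir d hlub hyd => h S hne hdir d hlub (hxy.trans hyd)

theorem wb_le (hc : ContinuousPoset α) {a x : α} (h : wayBelow a x) : a ≤ x := by
  obtain ⟨S, hS, hne, hdir, hlub⟩ := hc x
  obtain ⟨s, hs, has⟩ := h S hne hdir x hlub le_rfl
  exact has.trans (hlub.1 hs)

theorem wb_interp (hc : ContinuousPoset α) {a x : α} (h : wayBelow a x) :
    ∃ c, wayBelow a c ∧ wayBelow c x := by
  obtain ⟨S, hS, hne, hdir, hlub⟩ := hc x
  -- approximating set for each y
  have hT : ∀ y : α, ∃ T : Set α, T ⊆ {a | wayBelow a y} ∧ T.Nonempty ∧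
      DirectedOn (· ≤ ·) T ∧ IsLUB T y := hc
  choose T hTsub hTne hTdir hTlub using hT
  set D : Set α := ⋃ y ∈ S, T y with hD
  have hDmem : ∀ {d}, d ∈ D → ∃ y ∈ S, d ∈ T y := by
    intro d hd
    rw [hD, Set.mem_iUnion₂] at hd; exact ⟨hd.choose, hd.choose_spec.1, hd.choose_spec.2⟩
  have hDne : D.Nonempty := by
    obtain ⟨y, hy⟩ := hne
    obtain ⟨t, ht⟩ := hTne y
    exact ⟨t, Set.mem_biUnion hy ht⟩
  have hDdir : DirectedOn (· ≤ ·) D := by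
    intro d1 hd1 d2 hd2
    obtain ⟨y1, hy1, ht1⟩ := hDmem hd1
    obtain ⟨y2, hy2, ht2⟩ := hDmem hd2
    obtain ⟨z, hz, hy1z, hy2z⟩ := hdir y1 hy1 y2 hy2
    have h1 : wayBelow d1 z := wb_of_wb_of_le (hTsub y1 ht1) hy1z
    have h2 : wayBelow d2 z := wb_of_wb_of_le (hTsub y2 ht2) hy2z
    obtain ⟨s1, hs1, hd1s1⟩ := h1 (T z) (hTne z) (hTdir z) z (hTlub z) le_rfl
    obtain ⟨s2, hs2, hd2s2⟩ := h2 (T z) (hTne z) (hTdir z) z (hTlub z) le_rfl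
    obtain ⟨s, hs, hs1s, hs2s⟩ := hTdir z s1 hs1 s2 hs2
    exact ⟨s, Set.mem_biUnion hz hs, hd1s1.trans hs1s, hd2s2.trans hs2s⟩
  have hDlub : IsLUB D x := by
    constructor
    · intro d hd
      obtain ⟨y, hy, ht⟩ := hDmem hd
      exact (((hTlub y).1 ht)).trans (hlub.1 hy)
    · intro u hu
      refine hlub.2 fun y hy => (hTlub y).2 fun t ht => hu (Set.mem_biUnion hy ht)
  obtain ⟨s, hsD, has⟩ := h D hDne hDdir x hDlub le_rfl
  obtain ⟨y, hy, hsT⟩ := hDmem hsD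
  exact ⟨y, wb_of_le_of_wb has (hTsub y hsT), hS hy⟩

theorem wb_above_nonempty (h : Bicontinuous α') (x : α') : ∃ b, wayBelow x b := by
  by_contra hne
  push_neg at hne
  have hempty : {y | wayBelow x y} = (∅ : Set α') := by
    ext y; simp [hne y]
  have hglb := (h.2.2 x).2
  rw [hempty] at hglb
  have htop : ∀ y : α', y ≤ x := fun y => hglb.2 (fun z hz => hz.elim)
  have : wayBelow x x := by
    refine (h.2.1 x x).mpr fun S hne' hdir i hglb' hix => ?_
    obtain ⟨s, hs⟩ := hne'
    exact ⟨s, hs, htop s⟩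
  exact hne x this

theorem dual_cont (h : Bicontinuous α') : ContinuousPoset α'ᵒᵈ := by
  intro x
  refine ⟨{y | wayBelow (OrderDual.ofDual x) (OrderDual.ofDual y)}, ?_, ?_, ?_, ?_⟩
  · intro y hy
    exact (h.2.1 (OrderDual.ofDual x) (OrderDual.ofDual y)).mp hy
  · obtain ⟨b, hb⟩ := wb_above_nonempty h (OrderDual.ofDual x)
    exact ⟨OrderDual.toDual b, hb⟩
  · exact (h.2.2 (OrderDual.ofDual x)).1
  · exact (h.2.2 (OrderDual.ofDual x)).2

theorem wb_interp_dual (h : Bicontinuous α') {x b : α'} (hxb : wayBelow x b) :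
    ∃ d, wayBelow x d ∧ wayBelow d b := by
  have hd : wayBelow (α := α'ᵒᵈ) (OrderDual.toDual b) (OrderDual.toDual x) :=
    (h.2.1 x b).mp hxb
  obtain ⟨c, hc1, hc2⟩ := wb_interp (dual_cont h) hd
  exact ⟨OrderDual.ofDual c, (h.2.1 x _).mpr hc2, (h.2.1 _ b).mpr hc1⟩

theorem wb_below_nonempty (hc : ContinuousPoset α) (x : α) : ∃ a, wayBelow a x := by
  obtain ⟨S, hS, ⟨s, hs⟩, -, -⟩ := hc x
  exact ⟨s, hS hs⟩

theorem lower_directed (hc : ContinuousPoset α) {a1 a2 x : α}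
    (h1 : wayBelow a1 x) (h2 : wayBelow a2 x) :
    ∃ c, a1 ≤ c ∧ a2 ≤ c ∧ wayBelow c x := by
  obtain ⟨S, hS, hne, hdir, hlub⟩ := hc x
  obtain ⟨s1, hs1, h1'⟩ := h1 S hne hdir x hlub le_rfl
  obtain ⟨s2, hs2, h2'⟩ := h2 S hne hdir x hlub le_rfl
  obtain ⟨s, hs, hss1, hss2⟩ := hdir s1 hs1 s2 hs2
  exact ⟨s, h1'.trans hss1, h2'.trans hss2, hS hs⟩

theorem upper_directed (h : Bicontinuous α') {b1 b2 x : α'}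
    (h1 : wayBelow x b1) (h2 : wayBelow x b2) :
    ∃ d, wayBelow x d ∧ d ≤ b1 ∧ d ≤ b2 := by
  obtain ⟨d, hd, hd1, hd2⟩ := (h.2.2 x).1 b1 h1 b2 h2
  exact ⟨d, hd, hd1, hd2⟩

end Aux

/-- a countable dense subset of a bicontinuous poset yields a countable
basis of intervals with endpoints in it; separability implies second countability. -/
theorem countable_dense_gives_countable_basis {α : Type*} [PartialOrder α]
    (h : Bicontinuous α) (C : Set α) (hC : C.Countable)
    (hdense : @Dense α (intervalTop α) C) :
    @TopologicalSpace.IsTopologicalBasis α (intervalTop α)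
      {s | ∃ a ∈ C, ∃ b ∈ C, wayBelow a b ∧ s = {x | wayBelow a x ∧ wayBelow x b}} ∧
    Set.Countable
      {s | ∃ a ∈ C, ∃ b ∈ C, wayBelow a b ∧ s = {x | wayBelow a x ∧ wayBelow x b}} ∧
    @SecondCountableTopology α (intervalTop α) := by
  letI : TopologicalSpace α := intervalTop α
  set B := {s | ∃ a ∈ C, ∃ b ∈ C, wayBelow a b ∧ s = {x | wayBelow a x ∧ wayBelow x b}}
    with hBdef
  have hopen : ∀ a b : α, IsOpen {x | wayBelow a x ∧ wayBelow x b} := fun a b =>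
    TopologicalSpace.isOpen_generateFrom_of_mem ⟨a, b, rfl⟩
  -- refinement lemma
  have hrefine : ∀ {a x b : α}, wayBelow a x → wayBelow x b →
      ∃ a' ∈ C, ∃ b' ∈ C, a ≤ a' ∧ wayBelow a' x ∧ wayBelow x b' ∧ b' ≤ b := by
    intro a x b hax hxb
    obtain ⟨c, hac, hcx⟩ := wb_interp h.1 hax
    obtain ⟨d, hxd, hdb⟩ := wb_interp_dual h hxb
    obtain ⟨a', haC, ha'⟩ := hdense.exists_mem_open (hopen a x) ⟨c, hac, hcx⟩
    obtain ⟨b', hbC, hb'⟩ := hdense.exists_mem_open (hopen x b) ⟨d, hxd, hdb⟩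
    exact ⟨a', haC, b', hbC, wb_le h.1 ha'.1, ha'.2, hb'.1, wb_le h.1 hb'.2⟩
  have hcover : ∀ x : α, ∃ v ∈ B, x ∈ v := by
    intro x
    obtain ⟨a, ha⟩ := wb_below_nonempty h.1 x
    obtain ⟨b, hb⟩ := wb_above_nonempty h x
    obtain ⟨a', haC, b', hbC, -, hax, hxb, -⟩ := hrefine ha hb
    exact ⟨_, ⟨a', haC, b', hbC, wb_of_wb_of_le hax (wb_le h.1 hxb), rfl⟩, hax, hxb⟩
  have hbasis : TopologicalSpace.IsTopologicalBasis B := by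
    refine TopologicalSpace.isTopologicalBasis_of_isOpen_of_nhds ?_ ?_
    · rintro u ⟨a, -, b, -, -, rfl⟩
      exact hopen a b
    · intro x u hxu hu
      induction hu with
      | basic s hs =>
        obtain ⟨a, b, rfl⟩ := hs
        obtain ⟨a', haC, b', hbC, haa, hax, hxb, hbb⟩ := hrefine hxu.1 hxu.2
        refine ⟨_, ⟨a', haC, b', hbC, wb_of_wb_of_le hax (wb_le h.1 hxb), rfl⟩,
          ⟨hax, hxb⟩, ?_⟩
        rintro y ⟨hy1, hy2⟩
        exact ⟨wb_of_le_of_wb haa hy1, wb_of_wb_of_le hy2 hbb⟩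
      | univ =>
        obtain ⟨v, hv, hxv⟩ := hcover x
        exact ⟨v, hv, hxv, Set.subset_univ v⟩
      | inter u1 u2 _ _ ih1 ih2 =>
        obtain ⟨v1, ⟨a1, ha1C, b1, hb1C, hab1, rfl⟩, hxv1, hv1⟩ := ih1 hxu.1
        obtain ⟨v2, ⟨a2, ha2C, b2, hb2C, hab2, rfl⟩, hxv2, hv2⟩ := ih2 hxu.2
        obtain ⟨c, hc1, hc2, hcx⟩ := lower_directed h.1 hxv1.1 hxv2.1
        obtain ⟨d, hxd, hd1, hd2⟩ := upper_directed h hxv1.2 hxv2.2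
        obtain ⟨a', haC, b', hbC, hca, hax, hxb, hbd⟩ := hrefine hcx hxd
        refine ⟨_, ⟨a', haC, b', hbC, wb_of_wb_of_le hax (wb_le h.1 hxb), rfl⟩,
          ⟨hax, hxb⟩, ?_⟩
        rintro y ⟨hy1, hy2⟩
        exact ⟨hv1 ⟨wb_of_le_of_wb (hc1.trans hca) hy1,
                    wb_of_wb_of_le hy2 (hbd.trans hd1)⟩,
               hv2 ⟨wb_of_le_of_wb (hc2.trans hca) hy1,
                    wb_of_wb_of_le hy2 (hbd.trans hd2)⟩⟩
      | sUnion T _ ih =>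
        obtain ⟨t, htT, hxt⟩ := hxu
        obtain ⟨v, hv, hxv, hvt⟩ := ih t htT hxt
        exact ⟨v, hv, hxv, hvt.trans (Set.subset_sUnion_of_mem htT)⟩
  have hcount : B.Countable := by
    have : B ⊆ (fun p : α × α => {x | wayBelow p.1 x ∧ wayBelow x p.2}) '' (C ×ˢ C) := by
      rintro s ⟨a, haC, b, hbC, -, rfl⟩
      exact ⟨(a, b), ⟨haC, hbC⟩, rfl⟩
    exact ((hC.prod hC).image _).mono this
  exact ⟨hbasis, hcount, hbasis.secondCountableTopology hcount⟩
end
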